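/- Let d ≥ 2, let E : Fin d → ℝ be not all equal, and let p : Fin d → ℝ satisfy p_j > 0 for all j and Σ_j p_j = 1. Assume that for every T > 0 it is not the case that p_j = exp(−E_j/T)/Σ_l exp(−E_l/T) for all j, and that p is not the uniform distribution. Then there exist l, l̃ ∈ ℕ^d with Σ_j l_j = Σ_j l̃_j such that Π_j p_j^{l_j} > Π_j p_j^{l̃_j} and Σ_j l_j E_j > Σ_j l̃_j E_j. -/

import Mathlib

open Finset

lemma approx_pos (d : ℕ) (hd : 0 < d) (m f : Fin d → ℝ) (M : ℕ)
    (hm0 : ∑ j, m j = 0)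
    (hM : 2 * (∑ j, |f j|) < (M : ℝ) * ∑ j, m j * f j) :
    0 < ∑ j, (((d : ℤ) * ⌊(M : ℝ) * m j⌋ - ∑ i, ⌊(M : ℝ) * m i⌋ : ℤ) : ℝ) * f j := by
  set F := ∑ j, |f j| with hF
  have hFnn : 0 ≤ F := Finset.sum_nonneg fun j _ => abs_nonneg _
  set δ : Fin d → ℝ := fun j => (⌊(M : ℝ) * m j⌋ : ℝ) - (M : ℝ) * m j with hδ
  have hδ1 : ∀ j, |δ j| ≤ 1 := by
    intro j
    rw [abs_le]
    have h1 := Int.lt_floor_add_one ((M : ℝ) * m j)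
    have h2 := Int.floor_le ((M : ℝ) * m j)
    constructor <;> simp only [hδ] <;> linarith
  have hsumMm : ∑ j, (M : ℝ) * m j = 0 := by rw [← Finset.mul_sum, hm0, mul_zero]
  have hS : ((∑ i, ⌊(M : ℝ) * m i⌋ : ℤ) : ℝ) = ∑ i, δ i := by
    push_cast
    simp only [hδ]
    rw [Finset.sum_sub_distrib, hsumMm, sub_zero]
  have key : ∑ j, (((d : ℤ) * ⌊(M : ℝ) * m j⌋ - ∑ i, ⌊(M : ℝ) * m i⌋ : ℤ) : ℝ) * f j
      = (d : ℝ) * ((M : ℝ) * ∑ j, m j * f j) + (d : ℝ) * (∑ j, δ j * f j)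
        - (∑ j, δ j) * (∑ j, f j) := by
    have step : ∀ j, (((d : ℤ) * ⌊(M : ℝ) * m j⌋ - ∑ i, ⌊(M : ℝ) * m i⌋ : ℤ) : ℝ) * f j
        = (d : ℝ) * ((M : ℝ) * (m j * f j)) + (d : ℝ) * (δ j * f j) - (∑ i, δ i) * f j := by
      intro j
      have hfl : ((⌊(M : ℝ) * m j⌋ : ℤ) : ℝ) = (M : ℝ) * m j + δ j := by simp [hδ]
      rw [Int.cast_sub, Int.cast_mul, hS, hfl]
      push_cast
      ring
    rw [Finset.sum_congr rfl (fun j _ => step j), Finset.sum_sub_distrib,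
      Finset.sum_add_distrib, ← Finset.mul_sum, ← Finset.mul_sum, ← Finset.mul_sum,
      ← Finset.mul_sum]
  rw [key]
  have h1 : |∑ j, δ j * f j| ≤ F := by
    refine (Finset.abs_sum_le_sum_abs _ _).trans ?_
    apply Finset.sum_le_sum
    intro j _
    rw [abs_mul]
    calc |δ j| * |f j| ≤ 1 * |f j| := mul_le_mul_of_nonneg_right (hδ1 j) (abs_nonneg _)
    _ = |f j| := one_mul _
  have h2 : |∑ j, δ j| ≤ (d : ℝ) := by
    refine (Finset.abs_sum_le_sum_abs _ _).trans ?_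
    calc ∑ j, |δ j| ≤ ∑ _j : Fin d, (1:ℝ) := Finset.sum_le_sum fun j _ => hδ1 j
    _ = d := by simp
  have h3 : |∑ j, f j| ≤ F := Finset.abs_sum_le_sum_abs _ _
  have h4 : |(∑ j, δ j) * (∑ j, f j)| ≤ (d : ℝ) * F := by
    rw [abs_mul]
    exact mul_le_mul h2 h3 (abs_nonneg _) (Nat.cast_nonneg d)
  have hd1 : (1 : ℝ) ≤ d := by exact_mod_cast hd
  have e1 : -((d:ℝ) * F) ≤ (d:ℝ) * (∑ j, δ j * f j) := by
    have := (abs_le.mp h1).1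
    nlinarith
  have e2 : (∑ j, δ j) * (∑ j, f j) ≤ (d:ℝ) * F := (abs_le.mp h4).2
  have e3 : (d:ℝ) * (2 * F) < (d:ℝ) * ((M:ℝ) * ∑ j, m j * f j) :=
    mul_lt_mul_of_pos_left hM (by linarith)
  nlinarith


/-- The combinatorial core of Theorem 1: if a strictly positive probability
distribution `p` over non-constant levels `E` is neither a Gibbs distribution
at any finite positive temperature nor uniform, then there are two occupation
number vectors `l`, `ltil` with the same total particle number such that the
product state labelled by `l` is strictly more likely and strictly more
energetic than the one labelled by `ltil`. -/
theorem stmt_1 (d : ℕ) (hd : 2 ≤ d) (E p : Fin d → ℝ)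
    (hE : ¬ ∀ i j : Fin d, E i = E j)
    (hp_pos : ∀ j, 0 < p j) (hp_sum : ∑ j, p j = 1)
    (hGibbs : ∀ T : ℝ, 0 < T →
      ¬ ∀ j, p j = Real.exp (-(E j) / T) / ∑ l, Real.exp (-(E l) / T))
    (hunif : ¬ ∀ j, p j = 1 / d) :
    ∃ l ltil : Fin d → ℕ,
      (∑ j, l j) = (∑ j, ltil j) ∧
      (∏ j, p j ^ ltil j) < (∏ j, p j ^ l j) ∧
      (∑ j, (ltil j : ℝ) * E j) < (∑ j, (l j : ℝ) * E j) := by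
  have hd0 : 0 < d := by omega
  have hdR : (0:ℝ) < d := by exact_mod_cast hd0
  set q : Fin d → ℝ := fun j => Real.log (p j) with hq
  have hpq : ∀ j, p j = Real.exp (q j) := fun j => (Real.exp_log (hp_pos j)).symm
  set mq : ℝ := (∑ j, q j) / d with hmq
  set mE : ℝ := (∑ j, E j) / d with hmE
  set u : Fin d → ℝ := fun j => q j - mq with hu
  set v : Fin d → ℝ := fun j => E j - mE with hv
  have hu0 : ∑ j, u j = 0 := by
    simp only [hu]
    rw [Finset.sum_sub_distrib, Finset.sum_const, Finset.card_univ, Fintype.card_fin,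
      nsmul_eq_mul, hmq]
    field_simp
    ring
  have hv0 : ∑ j, v j = 0 := by
    simp only [hv]
    rw [Finset.sum_sub_distrib, Finset.sum_const, Finset.card_univ, Fintype.card_fin,
      nsmul_eq_mul, hmE]
    field_simp
    ring
  set A : ℝ := ∑ j, u j * u j with hA
  set B : ℝ := ∑ j, u j * v j with hB
  set C : ℝ := ∑ j, v j * v j with hC
  -- C > 0
  have hCpos : 0 < C := by
    push_neg at hE
    obtain ⟨i, j, hij⟩ := hE
    have hvne : v i ≠ 0 ∨ v j ≠ 0 := by
      by_contra h
      push_neg at h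
      apply hij
      have h1 := h.1; have h2 := h.2
      simp only [hv, sub_eq_zero] at h1 h2
      rw [h1, h2]
    obtain ⟨k, hk⟩ : ∃ k, v k ≠ 0 := hvne.elim (fun h => ⟨i, h⟩) (fun h => ⟨j, h⟩)
    have hle : v k * v k ≤ C :=
      Finset.single_le_sum (fun j _ => mul_self_nonneg (v j)) (Finset.mem_univ k)
    have : 0 < v k * v k := mul_self_pos.mpr hk
    linarith
  -- A > 0
  have hApos : 0 < A := by
    have hune : ∃ k, u k ≠ 0 := by
      by_contra h
      push_neg at h
      apply hunif
      have hqc : ∀ j, q j = mq := by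
        intro j; have := h j; simp only [hu, sub_eq_zero] at this; exact this
      have hpc : ∀ j, p j = Real.exp mq := by intro j; rw [hpq j, hqc j]
      have hsum : (d : ℝ) * Real.exp mq = 1 := by
        rw [← hp_sum, Finset.sum_congr rfl (fun j _ => hpc j)]
        simp [mul_comm]
      intro j
      rw [hpc j]
      field_simp at hsum ⊢
      linarith
    obtain ⟨k, hk⟩ := hune
    have hle : u k * u k ≤ A :=
      Finset.single_le_sum (fun j _ => mul_self_nonneg (u j)) (Finset.mem_univ k)
    have : 0 < u k * u k := mul_self_pos.mpr hk
    linarith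
  -- key construction of a real direction m
  obtain ⟨m, hm0, hmq', hmE'⟩ :
      ∃ m : Fin d → ℝ, (∑ j, m j = 0) ∧ (0 < ∑ j, m j * q j) ∧ (0 < ∑ j, m j * E j) := by
    have hqsplit : ∀ (m : Fin d → ℝ), (∑ j, m j = 0) →
        (∑ j, m j * q j = ∑ j, m j * u j) ∧ (∑ j, m j * E j = ∑ j, m j * v j) := by
      intro m hm0
      constructor
      · have : ∀ j, m j * q j = m j * u j + mq * m j := by
          intro j; simp only [hu]; ring
        rw [Finset.sum_congr rfl (fun j _ => this j), Finset.sum_add_distrib,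
          ← Finset.mul_sum, hm0, mul_zero, add_zero]
      · have : ∀ j, m j * E j = m j * v j + mE * m j := by
          intro j; simp only [hv]; ring
        rw [Finset.sum_congr rfl (fun j _ => this j), Finset.sum_add_distrib,
          ← Finset.mul_sum, hm0, mul_zero, add_zero]
    by_cases hBpos : 0 < B
    · refine ⟨v, hv0, ?_, ?_⟩
      · rw [(hqsplit v hv0).1]
        have : ∑ j, v j * u j = B := by
          rw [hB]; exact Finset.sum_congr rfl (fun j _ => mul_comm _ _)
        rw [this]; exact hBpos
      · rw [(hqsplit v hv0).2]; exact hCpos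
    · push_neg at hBpos
      -- show C*A - B^2 > 0
      have hD : 0 < C * A - B ^ 2 := by
        rcases lt_or_eq_of_le hBpos with hBlt | hBeq
        swap
        · -- B = 0 : then C*A - B^2 = C*A > 0
          rw [← hBeq]; nlinarith
        by_contra hD'
        push_neg at hD'
        have hw : ∀ j, C * u j - B * v j = 0 := by
          have hsq : ∑ j, (C * u j - B * v j) * (C * u j - B * v j)
              = C * (C * A - B ^ 2) := by
            have : ∀ j, (C * u j - B * v j) * (C * u j - B * v j)
                = C^2 * (u j * u j) - (2*C*B) * (u j * v j) + B^2 * (v j * v j) := by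
              intro j; ring
            rw [Finset.sum_congr rfl (fun j _ => this j)]
            rw [Finset.sum_add_distrib, Finset.sum_sub_distrib,
              ← Finset.mul_sum, ← Finset.mul_sum, ← Finset.mul_sum, ← hA, ← hB, ← hC]
            ring
          have hle0 : ∑ j, (C * u j - B * v j) * (C * u j - B * v j) ≤ 0 := by
            rw [hsq]
            exact mul_nonpos_of_nonneg_of_nonpos hCpos.le hD'
          have heq0 : ∑ j, (C * u j - B * v j) * (C * u j - B * v j) = 0 :=
            le_antisymm hle0 (Finset.sum_nonneg fun j _ => mul_self_nonneg _)
          intro j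
          have := (Finset.sum_eq_zero_iff_of_nonneg
            (fun j _ => mul_self_nonneg (C * u j - B * v j))).mp heq0 j (Finset.mem_univ j)
          exact mul_self_eq_zero.mp this
        -- p is then a Gibbs state at T = C / (-B)
        have hquv : ∀ j, q j = mq + B / C * (E j - mE) := by
          intro j
          have h := hw j
          have : u j = B / C * v j := by
            field_simp
            linarith [h]
          simp only [hu] at this
          simp only [hv] at this
          linarith [this]
        set T : ℝ := C / (-B) with hT
        have hTpos : 0 < T := div_pos hCpos (by linarith)
        refine hGibbs T hTpos ?_
        have harg : ∀ x : ℝ, -x / T = B / C * x := by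
          intro x
          rw [hT]
          field_simp
        set c : ℝ := Real.exp (mq - B / C * mE) with hc
        have hcpos : 0 < c := Real.exp_pos _
        have hpform : ∀ j, p j = c * Real.exp (B / C * E j) := by
          intro j
          rw [hpq j, hquv j, hc, ← Real.exp_add]
          ring_nf
        have hsum' : ∑ l, Real.exp (B / C * E l) = 1 / c := by
          have h1 : c * ∑ l, Real.exp (B / C * E l) = 1 := by
            rw [Finset.mul_sum, ← hp_sum]
            exact Finset.sum_congr rfl (fun j _ => (hpform j).symm)
          field_simp at h1 ⊢
          linarith
        intro j
        rw [hpform j]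
        have : ∑ l, Real.exp (-E l / T) = ∑ l, Real.exp (B / C * E l) :=
          Finset.sum_congr rfl (fun l _ => by rw [harg (E l)])
        rw [show -(E j) / T = B / C * E j from harg (E j), this, hsum', one_div, div_inv_eq_mul]
        ring
      -- now build m = C•u + (ε - B)•v
      set ε : ℝ := (C * A - B ^ 2) / (2 * (C - B)) with hε
      have hCB : 0 < C - B := by linarith
      have hεpos : 0 < ε := div_pos hD (by linarith)
      refine ⟨fun j => C * u j + (ε - B) * v j, ?_, ?_, ?_⟩
      · rw [Finset.sum_add_distrib, ← Finset.mul_sum, ← Finset.mul_sum, hu0, hv0]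
        ring
      · rw [(hqsplit _ (by
          rw [Finset.sum_add_distrib, ← Finset.mul_sum, ← Finset.mul_sum, hu0, hv0]; ring)).1]
        have : ∑ j, (C * u j + (ε - B) * v j) * u j = C * A + (ε - B) * B := by
          have hterm : ∀ j, (C * u j + (ε - B) * v j) * u j
              = C * (u j * u j) + (ε - B) * (u j * v j) := by intro j; ring
          rw [Finset.sum_congr rfl (fun j _ => hterm j), Finset.sum_add_distrib,
            ← Finset.mul_sum, ← Finset.mul_sum, ← hA, ← hB]
        rw [this]
        have hDval : C * A - B ^ 2 = ε * (2 * (C - B)) := by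
          rw [hε]; field_simp
        nlinarith
      · rw [(hqsplit _ (by
          rw [Finset.sum_add_distrib, ← Finset.mul_sum, ← Finset.mul_sum, hu0, hv0]; ring)).2]
        have : ∑ j, (C * u j + (ε - B) * v j) * v j = C * B + (ε - B) * C := by
          have hterm : ∀ j, (C * u j + (ε - B) * v j) * v j
              = C * (u j * v j) + (ε - B) * (v j * v j) := by intro j; ring
          rw [Finset.sum_congr rfl (fun j _ => hterm j), Finset.sum_add_distrib,
            ← Finset.mul_sum, ← Finset.mul_sum, ← hB, ← hC]
        rw [this]
        nlinarith
  -- rational (integer) approximation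
  set Fq : ℝ := ∑ j, |q j| with hFq
  set FE : ℝ := ∑ j, |E j| with hFE
  obtain ⟨M, hM⟩ := exists_nat_gt (max ((2 * Fq) / (∑ j, m j * q j))
    ((2 * FE) / (∑ j, m j * E j)))
  have hMq : 2 * Fq < (M : ℝ) * ∑ j, m j * q j :=
    (div_lt_iff₀ hmq').mp (lt_of_le_of_lt (le_max_left _ _) hM)
  have hME : 2 * FE < (M : ℝ) * ∑ j, m j * E j :=
    (div_lt_iff₀ hmE').mp (lt_of_le_of_lt (le_max_right _ _) hM)
  set z : Fin d → ℤ := fun j => (d : ℤ) * ⌊(M : ℝ) * m j⌋ - ∑ i, ⌊(M : ℝ) * m i⌋ with hz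
  have hz0 : ∑ j, z j = 0 := by
    simp only [hz]
    rw [Finset.sum_sub_distrib, ← Finset.mul_sum, Finset.sum_const, Finset.card_univ,
      Fintype.card_fin, nsmul_eq_mul]
    ring
  have hzq : 0 < ∑ j, (z j : ℝ) * q j := approx_pos d hd0 m q M hm0 hMq
  have hzE : 0 < ∑ j, (z j : ℝ) * E j := approx_pos d hd0 m E M hm0 hME
  -- split z into positive and negative parts
  refine ⟨fun j => (z j).toNat, fun j => (-(z j)).toNat, ?_, ?_, ?_⟩
  · have hZ : ∑ j, ((z j).toNat : ℤ) = ∑ j, (((-(z j)).toNat : ℤ)) := by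
      rw [← sub_eq_zero, ← Finset.sum_sub_distrib, ← hz0]
      exact Finset.sum_congr rfl (fun j _ => Int.toNat_sub_toNat_neg (z j))
    exact_mod_cast hZ
  · have hppos : 0 < ∏ j, p j ^ (-(z j)).toNat :=
      Finset.prod_pos fun j _ => pow_pos (hp_pos j) _
    have hprod : ∏ j, p j ^ (z j).toNat
        = (∏ j, p j ^ (-(z j)).toNat) * Real.exp (∑ j, (z j : ℝ) * q j) := by
      rw [Real.exp_sum, ← Finset.prod_mul_distrib]
      refine Finset.prod_congr rfl (fun j _ => ?_)
      have hpne : p j ≠ 0 := (hp_pos j).ne'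
      have hzpow : p j ^ (z j) = Real.exp ((z j : ℝ) * q j) := by
        rw [← Real.rpow_intCast, Real.rpow_def_of_pos (hp_pos j), hq]
        ring_nf
      have hnat : (((z j).toNat : ℤ)) = ((-(z j)).toNat : ℤ) + z j := by omega
      calc p j ^ (z j).toNat = p j ^ (((z j).toNat : ℤ)) := (zpow_natCast _ _).symm
        _ = p j ^ (((-(z j)).toNat : ℤ) + z j) := by rw [hnat]
        _ = p j ^ (((-(z j)).toNat : ℤ)) * p j ^ z j := zpow_add₀ hpne _ _
        _ = p j ^ (-(z j)).toNat * Real.exp ((z j : ℝ) * q j) := by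
            rw [zpow_natCast, hzpow]
    rw [hprod]
    have hexp : 1 < Real.exp (∑ j, (z j : ℝ) * q j) := Real.one_lt_exp_iff.mpr hzq
    nlinarith
  · rw [← sub_pos, ← Finset.sum_sub_distrib]
    have : ∀ j, (((z j).toNat : ℝ)) * E j - (((-(z j)).toNat : ℝ)) * E j
        = (z j : ℝ) * E j := by
      intro j
      rw [← sub_mul]
      congr 1
      have := Int.toNat_sub_toNat_neg (z j)
      exact_mod_cast congrArg (fun t : ℤ => (t : ℝ)) this
    rw [Finset.sum_congr rfl (fun j _ => this j)]
    exact hzE
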